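/- arXiv:nlin/0505018 — 3 statements merged into one kernel-verified Lean document; each statement's English description precedes it below -/
import Mathlib

section
/- The vector field Z₀ = c₁ ∂/∂c₁ + cₙ ∂/∂cₙ on ℝⁿ is a symmetry of the quadratic Volterra Poisson tensor P^{ij} = cᵢcⱼ(δ_{i+1,j} - δ_{j+1,i}): the Lie derivative of P along Z₀ vanishes, L_{Z₀} P = 0. -/
open scoped BigOperators

/-- Partial derivative of a function on `ℝ^n` in the `i`-th coordinate direction. -/
noncomputable def pderiv {n : ℕ} (i : Fin n) (f : (Fin n → ℝ) → ℝ) (x : Fin n → ℝ) : ℝ :=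
  fderiv ℝ f x (Pi.single i 1)

/-- The Jacobi identity for a bivector field written in coordinates. -/
def JacobiId {n : ℕ} (P : (Fin n → ℝ) → Fin n → Fin n → ℝ) : Prop :=
  ∀ x i j k, ∑ l, (P x l j * pderiv l (fun y => P y i k) x
    + P x l i * pderiv l (fun y => P y k j) x
    + P x l k * pderiv l (fun y => P y j i) x) = 0

/-- Kronecker delta on `Fin n`, valued in `ℝ`. -/
def kdelta {n : ℕ} (i j : Fin n) : ℝ := if i = j then 1 else 0

/-- The quadratic Poisson tensor of the periodic `n`-site Volterra lattice:
`P^{ij} = cᵢ cⱼ (δ_{i+1,j} - δ_{j+1,i})`, indices mod `n`. -/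
def Pvolt {n : ℕ} [NeZero n] (c : Fin n → ℝ) (i j : Fin n) : ℝ :=
  c i * c j * (kdelta (i + 1) j - kdelta (j + 1) i)

/-- The cubic Poisson tensor of the periodic `n`-site Volterra lattice. -/
def Qvolt {n : ℕ} [NeZero n] (c : Fin n → ℝ) (i j : Fin n) : ℝ :=
  c i * c j * (c i + c j) * (kdelta (i + 1) j - kdelta (j + 1) i)
    + c i * c (i + 1) * c (i + 2) * kdelta (i + 2) j
    - c i * c (i - 1) * c (i - 2) * kdelta (i - 2) j

/-- The index of `cₙ` (the last coordinate) in `Fin n`. -/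
def lastI (n : ℕ) [NeZero n] : Fin n := (0 : Fin n) - 1

/-- The vector field `Z₀ = c₁ ∂/∂c₁ + cₙ ∂/∂cₙ` (components). -/
def Z0 {n : ℕ} [NeZero n] (x : Fin n → ℝ) (i : Fin n) : ℝ :=
  if i = 0 then x i else if i = lastI n then x i else 0

/-- Lie derivative of a bivector field `P` along a vector field `Z`, in coordinates:
`(L_Z P)^{ij} = Σₗ (Zˡ ∂ₗ P^{ij} − P^{lj} ∂ₗ Zⁱ − P^{il} ∂ₗ Zʲ)`. -/
noncomputable def lieDerivBivector {n : ℕ} (Z : (Fin n → ℝ) → Fin n → ℝ)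
    (P : (Fin n → ℝ) → Fin n → Fin n → ℝ) (x : Fin n → ℝ) (i j : Fin n) : ℝ :=
  ∑ l, (Z x l * pderiv l (fun y => P y i j) x
    - P x l j * pderiv l (fun y => Z y i) x
    - P x i l * pderiv l (fun y => Z y j) x)

def chi (n : ℕ) [NeZero n] (i : Fin n) : ℝ :=
  if i = 0 then 1 else if i = lastI n then 1 else 0

lemma Z0_eq {n : ℕ} [NeZero n] (x : Fin n → ℝ) (i : Fin n) : Z0 x i = chi n i * x i := by
  unfold Z0 chi; split_ifs <;> ring

lemma fderiv_coord {n : ℕ} (i : Fin n) (x : Fin n → ℝ) :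
    fderiv ℝ (fun y : Fin n → ℝ => y i) x = ContinuousLinearMap.proj i :=
  (ContinuousLinearMap.proj i : (Fin n → ℝ) →L[ℝ] ℝ).fderiv

lemma pd_coord {n : ℕ} (l i : Fin n) (x : Fin n → ℝ) :
    pderiv l (fun y => y i) x = if i = l then 1 else 0 := by
  rw [pderiv, fderiv_coord]
  simp [Pi.single_apply]

lemma pd_quad {n : ℕ} (l i j : Fin n) (K : ℝ) (x : Fin n → ℝ) :
    pderiv l (fun y => y i * y j * K) x
      = ((if i = l then 1 else 0) * x j + x i * (if j = l then 1 else 0)) * K := by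
  have hi : DifferentiableAt ℝ (fun y : Fin n → ℝ => y i) x :=
    (ContinuousLinearMap.proj i : (Fin n → ℝ) →L[ℝ] ℝ).differentiableAt
  have hj : DifferentiableAt ℝ (fun y : Fin n → ℝ => y j) x :=
    (ContinuousLinearMap.proj j : (Fin n → ℝ) →L[ℝ] ℝ).differentiableAt
  rw [pderiv, fderiv_mul_const (by exact hi.mul hj : DifferentiableAt ℝ (fun y : Fin n → ℝ => y i * y j) x), fderiv_fun_mul hi hj]
  simp only [fderiv_coord, ContinuousLinearMap.add_apply, ContinuousLinearMap.smul_apply,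
    ContinuousLinearMap.proj_apply, Pi.single_apply, smul_eq_mul, mul_ite, ite_mul,
    mul_one, mul_zero, zero_mul, one_mul]
  split_ifs <;> ring

lemma pd_Z0 {n : ℕ} [NeZero n] (l i : Fin n) (x : Fin n → ℝ) :
    pderiv l (fun y => Z0 y i) x = chi n i * (if i = l then 1 else 0) := by
  unfold Z0 chi
  by_cases h0 : i = 0
  · simp [h0, pd_coord]
  · by_cases h1 : i = lastI n
    · simp [h0, h1, pd_coord]
    · simp [h0, h1, pderiv]


/-- `Z₀ = c₁ ∂/∂c₁ + cₙ ∂/∂cₙ` is a symmetry of the quadratic Volterra Poisson tensor: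
`L_{Z₀} P = 0`. -/
theorem stmt11 (n : ℕ) [NeZero n] (hn : 2 ≤ n) (x : Fin n → ℝ) (i j : Fin n) :
    lieDerivBivector Z0 (fun c => Pvolt c) x i j = 0 := by
  unfold lieDerivBivector
  have hP : ∀ (a b : Fin n), (fun y : Fin n → ℝ => Pvolt y a b)
      = fun y => y a * y b * (kdelta (a+1) b - kdelta (b+1) a) := fun a b => rfl
  have step : ∀ l : Fin n,
      (Z0 x l * pderiv l (fun y => Pvolt y i j) x
        - Pvolt x l j * pderiv l (fun y => Z0 y i) x
        - Pvolt x i l * pderiv l (fun y => Z0 y j) x)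
      = ((if i = l then chi n l * x l * x j * (kdelta (i+1) j - kdelta (j+1) i)
            - Pvolt x l j * chi n i else 0)
        + (if j = l then chi n l * x l * x i * (kdelta (i+1) j - kdelta (j+1) i)
            - Pvolt x i l * chi n j else 0)) := by
    intro l
    rw [hP, pd_quad, pd_Z0, pd_Z0, Z0_eq]
    by_cases hil : i = l <;> by_cases hjl : j = l <;> simp [hil, hjl] <;> ring
  rw [Finset.sum_congr rfl (fun l _ => step l), Finset.sum_add_distrib,
    Finset.sum_ite_eq, Finset.sum_ite_eq]
  simp only [Finset.mem_univ, if_true]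
  unfold Pvolt
  ring
end

section
/- For n = 2k+2 even, the function 𝓗_{k+1} = A + 1/A with A = √((c₂c₄⋯c_{2k+2})/(c₁c₃⋯c_{2k+1})) is a Casimir of the quadratic Volterra Poisson tensor P^{ij} = cᵢcⱼ(δ_{i+1,j} - δ_{j+1,i}): Σⱼ P^{ij} ∂𝓗_{k+1}/∂cⱼ = 0 for all i. -/
open scoped BigOperators

/-- The "totally disconnected" elementary polynomial `Jᵢ`: the sum, over all `i`-element
subsets of `ℤ/nℤ` containing no two cyclically adjacent indices, of the corresponding
monomials. -/
def Jpoly {n : ℕ} [NeZero n] (i : ℕ) (c : Fin n → ℝ) : ℝ :=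
  ∑ S ∈ Finset.univ.filter
      (fun S : Finset (Fin n) => S.card = i ∧ ∀ a ∈ S, a + 1 ∉ S),
    ∏ l ∈ S, c l

/-- For `n = 2k+2`, the function `A = √((c₂c₄⋯c_{2k+2})/(c₁c₃⋯c_{2k+1}))`
(indices are 1-based; in `Fin (2k+2)` the 1-based index `m` is `m-1`). -/
noncomputable def Afun (k : ℕ) (x : Fin (2 * k + 2) → ℝ) : ℝ :=
  Real.sqrt ((∏ i : Fin (k + 1), x ⟨2 * (i : ℕ) + 1, by have := i.isLt; omega⟩)
    / (∏ i : Fin (k + 1), x ⟨2 * (i : ℕ), by have := i.isLt; omega⟩))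

/-- The extra Hamiltonian `𝓗_{k+1} = A + 1/A` of the even Volterra lattice. -/
noncomputable def lastHam (k : ℕ) (x : Fin (2 * k + 2) → ℝ) : ℝ :=
  Afun k x + (Afun k x)⁻¹

lemma hasFDerivAt_coordProd {n m : ℕ} (e : Fin m → Fin n) (x : Fin n → ℝ) :
    HasFDerivAt (fun y : Fin n → ℝ => ∏ i, y (e i))
      (∑ i, (∏ j ∈ Finset.univ.erase i, x (e j)) • ContinuousLinearMap.proj (R := ℝ) (φ := fun _ : Fin n => ℝ) (e i)) x :=
  HasFDerivAt.finset_prod fun i _ => hasFDerivAt_apply (e i) x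

lemma coordProd_apply_single {n m : ℕ} (e : Fin m → Fin n) (he : Function.Injective e)
    (x : Fin n → ℝ) (j : Fin n) :
    x j * ((∑ i, (∏ l ∈ Finset.univ.erase i, x (e l)) •
        ContinuousLinearMap.proj (R := ℝ) (e i) : (Fin n → ℝ) →L[ℝ] ℝ)) (Pi.single j 1)
      = if ∃ i, e i = j then ∏ i, x (e i) else 0 := by
  simp only [ContinuousLinearMap.coe_sum', Finset.sum_apply, ContinuousLinearMap.coe_smul',
    Pi.smul_apply, ContinuousLinearMap.proj_apply, smul_eq_mul, Pi.single_apply]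
  by_cases h : ∃ i, e i = j
  · obtain ⟨i0, hi0⟩ := h
    rw [if_pos ⟨i0, hi0⟩, Finset.sum_eq_single i0]
    · rw [hi0, if_pos rfl, mul_one, ← hi0]
      exact Finset.mul_prod_erase Finset.univ (fun i => x (e i)) (Finset.mem_univ i0)
    · intro b _ hb
      rw [if_neg, mul_zero]
      intro hbj; exact hb (he (hbj.trans hi0.symm))
    · intro h'; exact absurd (Finset.mem_univ i0) h'
  · rw [if_neg h, Finset.sum_eq_zero, mul_zero]
    intro b _
    rw [if_neg fun hbj => h ⟨b, hbj⟩, mul_zero]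

lemma volterra_key_pderiv (k : ℕ) (x : Fin (2 * k + 2) → ℝ) (hx : ∀ i, 0 < x i) :
    ∃ K : ℝ, ∀ j, x j * pderiv j (lastHam k) x = (if Odd (j : ℕ) then K else -K) := by
  set eB : Fin (k + 1) → Fin (2 * k + 2) :=
    fun i => ⟨2 * (i : ℕ) + 1, by have := i.isLt; omega⟩ with heB
  set eC : Fin (k + 1) → Fin (2 * k + 2) :=
    fun i => ⟨2 * (i : ℕ), by have := i.isLt; omega⟩ with heC
  have heBinj : Function.Injective eB := by
    intro a b hab
    have : 2 * (a : ℕ) + 1 = 2 * (b : ℕ) + 1 := congrArg Fin.val hab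
    exact Fin.ext (by omega)
  have heCinj : Function.Injective eC := by
    intro a b hab
    have : 2 * (a : ℕ) = 2 * (b : ℕ) := congrArg Fin.val hab
    exact Fin.ext (by omega)
  set B : ℝ := ∏ i, x (eB i) with hB
  set C : ℝ := ∏ i, x (eC i) with hC
  have hBpos : 0 < B := Finset.prod_pos fun i _ => hx _
  have hCpos : 0 < C := Finset.prod_pos fun i _ => hx _
  set DB : (Fin (2 * k + 2) → ℝ) →L[ℝ] ℝ := ∑ i, (∏ l ∈ Finset.univ.erase i, x (eB l)) •
      ContinuousLinearMap.proj (R := ℝ) (eB i) with hDB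
  set DC : (Fin (2 * k + 2) → ℝ) →L[ℝ] ℝ := ∑ i, (∏ l ∈ Finset.univ.erase i, x (eC l)) •
      ContinuousLinearMap.proj (R := ℝ) (eC i) with hDC
  set Dr : (Fin (2 * k + 2) → ℝ) →L[ℝ] ℝ := B • ((-(C ^ 2)⁻¹) • DC) + C⁻¹ • DB with hDr
  have hrd : HasFDerivAt (fun y : Fin (2 * k + 2) → ℝ =>
      (∏ i, y (eB i)) / (∏ i, y (eC i))) Dr x := by
    have hCinv : HasFDerivAt (fun y : Fin (2 * k + 2) → ℝ => (∏ i, y (eC i))⁻¹)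
        ((-(C ^ 2)⁻¹) • DC) x := by
      have h := (hasDerivAt_inv hCpos.ne').comp_hasFDerivAt x (hasFDerivAt_coordProd eC x)
      exact h
    have h := (hasFDerivAt_coordProd eB x).mul hCinv
    have hfun : (fun y : Fin (2 * k + 2) → ℝ => (∏ i, y (eB i)) / (∏ i, y (eC i)))
        = fun y => (∏ i, y (eB i)) * (∏ i, y (eC i))⁻¹ :=
      funext fun _ => div_eq_mul_inv _ _
    rw [hfun, hDr]
    exact h
  set r : ℝ := B / C with hr
  have hrpos : 0 < r := div_pos hBpos hCpos
  have hsq : 0 < Real.sqrt r := Real.sqrt_pos.2 hrpos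
  set d : ℝ := 1 / (2 * Real.sqrt r) - (1 / (2 * Real.sqrt r)) / (Real.sqrt r) ^ 2 with hd
  have hhd : HasDerivAt (fun t : ℝ => Real.sqrt t + (Real.sqrt t)⁻¹) d r := by
    have h1 : HasDerivAt Real.sqrt (1 / (2 * Real.sqrt r)) r := Real.hasDerivAt_sqrt hrpos.ne'
    have h2 := h1.inv hsq.ne'
    have := h1.add h2
    simpa [hd, sub_eq_add_neg, neg_div] using
      (show HasDerivAt (fun t : ℝ => Real.sqrt t + (Real.sqrt t)⁻¹) _ r from this)
  have hH : HasFDerivAt (lastHam k) (d • Dr) x := by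
    have := hhd.comp_hasFDerivAt x hrd
    exact this
  refine ⟨d * r, fun j => ?_⟩
  have hpd : pderiv j (lastHam k) x = d * (Dr (Pi.single j 1)) := by
    unfold pderiv
    rw [hH.fderiv]
    simp
  have happ : (Dr (Pi.single j 1) : ℝ)
      = B * (-(C ^ 2)⁻¹) * DC (Pi.single j 1) + C⁻¹ * DB (Pi.single j 1) := by
    rw [hDr]
    simp [mul_assoc]
  have hBval := coordProd_apply_single eB heBinj x j
  have hCval := coordProd_apply_single eC heCinj x j
  rw [← hDB] at hBval
  rw [← hDC] at hCval
  have hvB : ∀ i : Fin (k + 1), ((eB i : Fin (2 * k + 2)) : ℕ) = 2 * (i : ℕ) + 1 :=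
    fun i => rfl
  have hvC : ∀ i : Fin (k + 1), ((eC i : Fin (2 * k + 2)) : ℕ) = 2 * (i : ℕ) :=
    fun i => rfl
  have hrangeB : (∃ i, eB i = j) ↔ (j : ℕ) % 2 = 1 := by
    constructor
    · rintro ⟨i, rfl⟩; rw [hvB]; omega
    · intro hm
      have hj := j.isLt
      refine ⟨⟨((j : ℕ) - 1) / 2, by omega⟩, Fin.ext ?_⟩
      rw [hvB]; simp; omega
  have hrangeC : (∃ i, eC i = j) ↔ (j : ℕ) % 2 = 0 := by
    constructor
    · rintro ⟨i, rfl⟩; rw [hvC]; omega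
    · intro hm
      have hj := j.isLt
      refine ⟨⟨(j : ℕ) / 2, by omega⟩, Fin.ext ?_⟩
      rw [hvC]; simp; omega
  have hC0 : C ≠ 0 := hCpos.ne'
  have e1 : x j * pderiv j (lastHam k) x
      = d * (B * -(C ^ 2)⁻¹ * (x j * DC (Pi.single j 1))
          + C⁻¹ * (x j * DB (Pi.single j 1))) := by
    rw [hpd, happ]; ring
  by_cases hodd : Odd (j : ℕ)
  · rw [if_pos hodd]
    have h1 : x j * DB (Pi.single j 1) = B := by
      rw [hBval, if_pos (hrangeB.2 (Nat.odd_iff.1 hodd))]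
    have h2 : x j * DC (Pi.single j 1) = 0 := by
      rw [hCval, if_neg]
      intro h
      have := hrangeC.1 h
      have := Nat.odd_iff.1 hodd
      omega
    rw [e1, h1, h2, hr]
    field_simp
    ring
  · rw [if_neg hodd]
    have h1 : x j * DB (Pi.single j 1) = 0 := by
      rw [hBval, if_neg]
      intro h
      have := hrangeB.1 h
      have := Nat.not_odd_iff.1 hodd
      omega
    have h2 : x j * DC (Pi.single j 1) = C := by
      rw [hCval, if_pos (hrangeC.2 (Nat.not_odd_iff.1 hodd))]
    rw [e1, h1, h2, hr]
    field_simp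
    ring

/-- For `n = 2k+2`, the function `𝓗_{k+1} = A + 1/A` is a Casimir of the quadratic
Volterra Poisson tensor `P`. -/
theorem stmt16 (k : ℕ) (x : Fin (2 * k + 2) → ℝ) (hx : ∀ i, 0 < x i) (i : Fin (2 * k + 2)) :
    ∑ j, Pvolt x i j * pderiv j (lastHam k) x = 0 := by
  obtain ⟨K, hK⟩ := volterra_key_pderiv k x hx
  set f : Fin (2 * k + 2) → ℝ := fun j => if Odd (j : ℕ) then K else -K with hf
  have hterm : ∀ j, Pvolt x i j * pderiv j (lastHam k) x
      = x i * ((kdelta (i + 1) j - kdelta (i - 1) j) * f j) := by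
    intro j
    have hkd : kdelta (j + 1) i = kdelta (i - 1) j := by
      unfold kdelta
      congr 1
      simp only [eq_iff_iff]
      constructor
      · rintro rfl; simp
      · rintro rfl; simp [sub_add_cancel]
    unfold Pvolt
    have hfj : f j = x j * pderiv j (lastHam k) x := (hK j).symm
    rw [hkd, hfj]
    ring
  rw [Finset.sum_congr rfl fun j _ => hterm j, ← Finset.mul_sum]
  have hsum : ∑ j, (kdelta (i + 1) j - kdelta (i - 1) j) * f j = f (i + 1) - f (i - 1) := by
    simp only [sub_mul, Finset.sum_sub_distrib, kdelta, ite_mul, one_mul, zero_mul]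
    rw [Finset.sum_ite_eq Finset.univ (i + 1) f, Finset.sum_ite_eq Finset.univ (i - 1) f]
    simp
  have hone : (1 : ℕ) % (2 * k + 2) = 1 := Nat.mod_eq_of_lt (by omega)
  have hpar : Odd (((i + 1 : Fin (2 * k + 2))) : ℕ) ↔ Odd (((i - 1 : Fin (2 * k + 2))) : ℕ) := by
    have ha : (((i + 1 : Fin (2 * k + 2))) : ℕ) = ((i : ℕ) + 1) % (2 * k + 2) := by
      rw [Fin.add_def]
      simp [Fin.val_one', hone]
    have hb : (((i - 1 : Fin (2 * k + 2))) : ℕ) = ((2 * k + 2 - 1) + (i : ℕ)) % (2 * k + 2) := by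
      rw [Fin.sub_def]
      simp [Fin.val_one', hone]
    have h2 : ∀ a : ℕ, a % (2 * k + 2) % 2 = a % 2 := fun a =>
      Nat.mod_mod_of_dvd a ⟨k + 1, by ring⟩
    rw [Nat.odd_iff, Nat.odd_iff, ha, hb, h2, h2]
    omega
  have : f (i + 1) = f (i - 1) := by
    rw [hf]
    simp only []
    by_cases h : Odd (((i + 1 : Fin (2 * k + 2))) : ℕ)
    · rw [if_pos h, if_pos (hpar.1 h)]
    · rw [if_neg h, if_neg (fun h' => h (hpar.2 h'))]
  rw [hsum, this, sub_self, mul_zero]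
end

section
/- Let Z = −(1/𝓗₀) Z₀ where 𝓗₀ = (∏ᵢcᵢ)^{-1/2} and Z₀ = c₁ ∂/∂c₁ + cₙ ∂/∂cₙ, and let 𝓗ⱼ = Jⱼ/π with π = (∏ᵢcᵢ)^{1/2} and Jⱼ the totally-disconnected elementary polynomial. Then L_Z(𝓗ⱼ) = Jⱼ|_{c₁ = cₙ = 0}, i.e., the Lie derivative of 𝓗ⱼ along Z equals the polynomial Jⱼ with c₁ and cₙ set to zero. -/
open scoped BigOperators

section Aux
variable {n : ℕ}

lemma hasF_prod (S : Finset (Fin n)) (x : Fin n → ℝ) :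
    HasFDerivAt (fun y : Fin n → ℝ => ∏ l ∈ S, y l)
      (∑ l ∈ S, (∏ m ∈ S.erase l, x m) • (ContinuousLinearMap.proj l : (Fin n → ℝ) →L[ℝ] ℝ)) x :=
  HasFDerivAt.finset_prod fun l _ => hasFDerivAt_apply l x

lemma hasF_sum (F : Finset (Finset (Fin n))) (x : Fin n → ℝ) :
    HasFDerivAt (fun y : Fin n → ℝ => ∑ S ∈ F, ∏ l ∈ S, y l)
      (∑ S ∈ F, ∑ l ∈ S, (∏ m ∈ S.erase l, x m) • (ContinuousLinearMap.proj l : (Fin n → ℝ) →L[ℝ] ℝ)) x :=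
  HasFDerivAt.fun_sum fun S _ => hasF_prod S x

lemma eval_prodmap (S : Finset (Fin n)) (x : Fin n → ℝ) (i : Fin n) :
    (∑ l ∈ S, (∏ m ∈ S.erase l, x m) • (ContinuousLinearMap.proj l : (Fin n → ℝ) →L[ℝ] ℝ))
        (Pi.single i 1)
      = if i ∈ S then ∏ m ∈ S.erase i, x m else 0 := by
  simp [ContinuousLinearMap.sum_apply, Pi.single_apply, mul_ite, Finset.sum_ite_eq']

end Aux

/-- For `Z = −(1/𝓗₀) Z₀` with `𝓗₀ = (∏ᵢcᵢ)^{-1/2}` and `Z₀ = c₁ ∂/∂c₁ + cₙ ∂/∂cₙ`, and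
`𝓗ⱼ = Jⱼ/π` with `π = (∏ᵢcᵢ)^{1/2}`, one has `L_Z(𝓗ⱼ) = Jⱼ|_{c₁ = cₙ = 0}`. -/
theorem stmt17 (n : ℕ) [NeZero n] (hn : 2 ≤ n) (j : ℕ) (x : Fin n → ℝ) (hx : ∀ i, 0 < x i) :
    -((Real.sqrt (∏ l, x l))⁻¹)⁻¹
        * (x 0 * pderiv 0 (fun y => Jpoly j y / Real.sqrt (∏ l, y l)) x
          + x (lastI n) * pderiv (lastI n) (fun y => Jpoly j y / Real.sqrt (∏ l, y l)) x)
      = Jpoly j (fun a => if a = 0 ∨ a = lastI n then 0 else x a) := by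
  classical
  set F : Finset (Finset (Fin n)) := Finset.univ.filter
      (fun S : Finset (Fin n) => S.card = j ∧ ∀ a ∈ S, a + 1 ∉ S) with hF
  set P : ℝ := ∏ l, x l with hPdef
  have hP : 0 < P := Finset.prod_pos fun l _ => hx l
  set s : ℝ := Real.sqrt P with hsdef
  have hs : 0 < s := Real.sqrt_pos.mpr hP
  have hs2 : s ^ 2 = P := Real.sq_sqrt hP.le
  set FJ : (Fin n → ℝ) →L[ℝ] ℝ :=
    ∑ S ∈ F, ∑ l ∈ S, (∏ m ∈ S.erase l, x m) • (ContinuousLinearMap.proj l) with hFJ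
  set FP : (Fin n → ℝ) →L[ℝ] ℝ :=
    ∑ l ∈ Finset.univ, (∏ m ∈ Finset.univ.erase l, x m) • (ContinuousLinearMap.proj l) with hFP
  have hJ : HasFDerivAt (fun y : Fin n → ℝ => Jpoly j y) FJ x := by
    unfold Jpoly; exact hasF_sum F x
  have hG : HasFDerivAt (fun y : Fin n → ℝ => Real.sqrt (∏ l, y l)) ((1 / (2 * s)) • FP) x :=
    HasFDerivAt.sqrt (hasF_prod Finset.univ x) hP.ne'
  have hInv : HasFDerivAt (fun y : Fin n → ℝ => (Real.sqrt (∏ l, y l))⁻¹)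
      ((-(s ^ 2)⁻¹) • ((1 / (2 * s)) • FP)) x :=
    (hasDerivAt_inv hs.ne').comp_hasFDerivAt x hG
  have hJx : Jpoly j x = ∑ S ∈ F, ∏ l ∈ S, x l := rfl
  set D : (Fin n → ℝ) →L[ℝ] ℝ :=
    (Jpoly j x) • ((-(s ^ 2)⁻¹) • ((1 / (2 * s)) • FP)) + s⁻¹ • FJ with hD
  have hdiv : HasFDerivAt (fun y : Fin n → ℝ => Jpoly j y / Real.sqrt (∏ l, y l)) D x := by
    simp only [div_eq_mul_inv]
    exact hJ.mul hInv
  have hpd : ∀ i : Fin n, pderiv i (fun y => Jpoly j y / Real.sqrt (∏ l, y l)) x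
      = Jpoly j x * (-(s ^ 2)⁻¹) * ((1 / (2 * s)) * FP (Pi.single i 1))
        + s⁻¹ * FJ (Pi.single i 1) := by
    intro i
    rw [pderiv, hdiv.fderiv]
    simp [hD, mul_assoc]
  -- evaluate FP and FJ
  have hFPval : ∀ i : Fin n, x i * FP (Pi.single i 1) = P := by
    intro i
    rw [hFP, eval_prodmap, if_pos (Finset.mem_univ i)]
    exact Finset.mul_prod_erase _ x (Finset.mem_univ i)
  have hFJval : ∀ i : Fin n, x i * FJ (Pi.single i 1)
      = ∑ S ∈ F, (if i ∈ S then ∏ l ∈ S, x l else 0) := by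
    intro i
    rw [hFJ, ContinuousLinearMap.sum_apply, Finset.mul_sum]
    refine Finset.sum_congr rfl fun S _ => ?_
    rw [eval_prodmap]
    split_ifs with h
    · exact Finset.mul_prod_erase S x h
    · exact mul_zero _
  have key : ∀ i : Fin n, x i * pderiv i (fun y => Jpoly j y / Real.sqrt (∏ l, y l)) x
      = Jpoly j x * (-(s ^ 2)⁻¹) * ((1 / (2 * s)) * P)
        + s⁻¹ * ∑ S ∈ F, (if i ∈ S then ∏ l ∈ S, x l else 0) := by
    intro i
    rw [← hFPval i, ← hFJval i, hpd i]; ring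
  have hlast1 : lastI n + 1 = (0 : Fin n) := by rw [lastI]; exact sub_add_cancel 0 1
  have main : ∀ b0 bl JX : ℝ,
      -s * ((JX * (-(s ^ 2)⁻¹) * ((1 / (2 * s)) * P) + s⁻¹ * b0)
        + (JX * (-(s ^ 2)⁻¹) * ((1 / (2 * s)) * P) + s⁻¹ * bl)) = JX - b0 - bl := by
    intro b0 bl JX
    rw [← hs2]
    field_simp
    ring
  have hJx' : Jpoly j (fun a => if a = 0 ∨ a = lastI n then 0 else x a)
      = ∑ S ∈ F, ∏ l ∈ S, (if l = 0 ∨ l = lastI n then 0 else x l) := rfl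
  rw [inv_inv, key 0, key (lastI n), main, hJx, hJx', ← Finset.sum_sub_distrib,
    ← Finset.sum_sub_distrib]
  refine Finset.sum_congr rfl fun S hS => ?_
  rw [hF, Finset.mem_filter] at hS
  obtain ⟨-, -, hadj⟩ := hS
  by_cases h0 : (0 : Fin n) ∈ S
  · have hl : lastI n ∉ S := fun hl => (hadj _ hl) (hlast1 ▸ h0)
    have hz : ∏ l ∈ S, (if l = 0 ∨ l = lastI n then (0:ℝ) else x l) = 0 :=
      Finset.prod_eq_zero h0 (by simp)
    simp [h0, hl, hz]
  · by_cases hl : lastI n ∈ S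
    · have hz : ∏ l ∈ S, (if l = 0 ∨ l = lastI n then (0:ℝ) else x l) = 0 :=
        Finset.prod_eq_zero hl (by simp)
      simp [h0, hl, hz]
    · have hz : ∏ l ∈ S, (if l = 0 ∨ l = lastI n then (0:ℝ) else x l) = ∏ l ∈ S, x l :=
        Finset.prod_congr rfl fun l hlm => by
          have l0 : l ≠ 0 := fun e => h0 (e ▸ hlm)
          have ll : l ≠ lastI n := fun e => hl (e ▸ hlm)
          simp [l0, ll]
      simp [h0, hl, hz]
end
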